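/- arXiv:1609.05987 — 2 statements merged into one kernel-verified Lean document; each statement's English description precedes it below -/
import Mathlib

section
/- Let K ≥ 1, n : Fin K → ℕ with all n i ≥ 1, and let ρ₁, ρ₂ be Hermitian positive-semidefinite matrices indexed by (Π i : Fin K, Fin (n i))² over ℂ. If ρ₁ and ρ₂ are SLOCC equivalent, then there exist unitary matrices X, Y indexed by (Π i, Fin (n i))² and an invertible diagonal matrix B with positive real diagonal entries such that ρ₁ = X B Y† ρ₂ Y B X†, and for every i₀ : Fin K the realignment of the matrix XBY† with respect to the bipartition {i₀} versus the remaining parties has rank 1. -/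
open Matrix ComplexOrder

/-- Extend a local index `a` at position `i₀` and indices `f` on the remaining
positions to a full multi-index. -/
def extendIdx {ι : Type*} [DecidableEq ι] {m : ι → ℕ} (i₀ : ι) (a : Fin (m i₀))
    (f : ∀ j : {j : ι // j ≠ i₀}, Fin (m j)) : ∀ i, Fin (m i) :=
  fun i => if h : i = i₀ then cast (congrArg (fun k => Fin (m k)) h).symm a else f ⟨i, h⟩

/-- The realignment of a matrix `A` indexed by multi-indices, with respect to the
bipartition `{i₀}` versus the remaining parties. -/
def realignAt {ι : Type*} [DecidableEq ι] {m : ι → ℕ}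
    (A : Matrix (∀ i, Fin (m i)) (∀ i, Fin (m i)) ℂ) (i₀ : ι) :
    Matrix (Fin (m i₀) × Fin (m i₀))
      ((∀ j : {j : ι // j ≠ i₀}, Fin (m j)) × (∀ j : {j : ι // j ≠ i₀}, Fin (m j))) ℂ :=
  Matrix.of fun p q => A (extendIdx i₀ p.1 q.1) (extendIdx i₀ p.2 q.2)

@[simp] lemma extendIdx_self {ι : Type*} [DecidableEq ι] {m : ι → ℕ} (i₀ : ι) (a : Fin (m i₀))
    (f : ∀ j : {j : ι // j ≠ i₀}, Fin (m j)) : extendIdx i₀ a f i₀ = a := by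
  simp [extendIdx]

@[simp] lemma extendIdx_ne {ι : Type*} [DecidableEq ι] {m : ι → ℕ} (i₀ : ι) (a : Fin (m i₀))
    (f : ∀ j : {j : ι // j ≠ i₀}, Fin (m j)) (j : ι) (h : j ≠ i₀) :
    extendIdx i₀ a f j = f ⟨j, h⟩ := by
  simp [extendIdx, h]

/-- A nonzero outer product has rank one. -/
lemma rank_vecMulVec_eq_one {m n : Type*} [Fintype m] [Fintype n] [DecidableEq m] [DecidableEq n]
    {w : m → ℂ} {v : n → ℂ} (hw : w ≠ 0) (hv : v ≠ 0) :
    (Matrix.vecMulVec w v).rank = 1 := by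
  refine le_antisymm ?_ ?_
  · rw [Matrix.vecMulVec_eq (Fin 1)]
    exact (Matrix.rank_mul_le_left _ _).trans
      ((Matrix.rank_le_card_width _).trans (by simp))
  · obtain ⟨q, hq⟩ := Function.ne_iff.mp hv
    obtain ⟨p, hp⟩ := Function.ne_iff.mp hw
    rw [Nat.one_le_iff_ne_zero]
    intro h0
    rw [Matrix.rank, Submodule.finrank_eq_zero] at h0
    have := LinearMap.mem_range_self (Matrix.vecMulVec w v).mulVecLin (Pi.single q 1)
    rw [h0, Submodule.mem_bot] at this
    have := congrFun this p
    simp [Matrix.mulVecLin, Matrix.mulVec, Matrix.vecMulVec, dotProduct,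
      Pi.single_apply] at this
    exact this.elim (fun h => hp h) (fun h => hq h)

/-- An invertible matrix over a nonempty index type has a nonzero entry. -/
lemma exists_entry_ne_zero {m : Type*} [Fintype m] [DecidableEq m] [Nonempty m]
    {A : Matrix m m ℂ} (hA : IsUnit A) : ∃ r s, A r s ≠ 0 := by
  by_contra h
  push_neg at h
  have hA0 : A = 0 := by ext r s; exact h r s
  rw [hA0, Matrix.isUnit_iff_isUnit_det, Matrix.det_zero] at hA
  simpa using hA

/-- Singular value decomposition of an invertible matrix, with positive singular values. -/
lemma exists_svd {N : Type*} [Fintype N] [DecidableEq N] (T S : Matrix N N ℂ)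
    (hTS : T * S = 1) :
    ∃ (X Y : Matrix N N ℂ) (b : N → ℝ),
      X ∈ Matrix.unitaryGroup N ℂ ∧ Y ∈ Matrix.unitaryGroup N ℂ ∧ (∀ x, 0 < b x) ∧
      X * Matrix.diagonal (fun x => (b x : ℂ)) * Yᴴ = T := by
  have hST : S * T = 1 := mul_eq_one_comm.mp hTS
  have hHpd : (Tᴴ * T).PosDef := by
    refine Matrix.PosDef.of_dotProduct_mulVec_pos (Matrix.isHermitian_conjTranspose_mul_self T) fun x hx => ?_
    rw [← Matrix.mulVec_mulVec, Matrix.dotProduct_mulVec, Matrix.vecMul_conjTranspose,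
      star_star]
    refine Matrix.dotProduct_star_self_pos_iff.mpr fun h => hx ?_
    have : S *ᵥ (T *ᵥ x) = 0 := by rw [h, Matrix.mulVec_zero]
    rwa [Matrix.mulVec_mulVec, hST, Matrix.one_mulVec] at this
  have hH := hHpd.isHermitian
  set Y : Matrix N N ℂ := (Matrix.IsHermitian.eigenvectorUnitary hH : Matrix N N ℂ) with hY
  have hYmem : Y ∈ Matrix.unitaryGroup N ℂ := (Matrix.IsHermitian.eigenvectorUnitary hH).2
  have hYY' : Y * Yᴴ = 1 := by
    simpa [Matrix.star_eq_conjTranspose] using Matrix.mem_unitaryGroup_iff.mp hYmem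
  have hY'Y : Yᴴ * Y = 1 := by
    simpa [Matrix.star_eq_conjTranspose] using Matrix.mem_unitaryGroup_iff'.mp hYmem
  set b : N → ℝ := fun x => Real.sqrt (hH.eigenvalues x) with hb
  have hbpos : ∀ x, 0 < b x := fun x => Real.sqrt_pos.mpr (hHpd.eigenvalues_pos x)
  set B : Matrix N N ℂ := Matrix.diagonal (fun x => (b x : ℂ)) with hBdef
  have hBB : B * B = Matrix.diagonal (RCLike.ofReal ∘ hH.eigenvalues) := by
    rw [hBdef, Matrix.diagonal_mul_diagonal]
    refine congrArg Matrix.diagonal (funext fun x => ?_)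
    rw [← Complex.ofReal_mul, Real.mul_self_sqrt (hHpd.eigenvalues_pos x).le]
    rfl
  have hspec : Tᴴ * T = Y * (B * B) * Yᴴ := by
    rw [hBB]
    simpa [Matrix.star_eq_conjTranspose] using hH.spectral_theorem
  set X : Matrix N N ℂ := T * Y * Matrix.diagonal (fun x => ((b x : ℂ))⁻¹) with hXdef
  have hBinv : Matrix.diagonal (fun x => ((b x : ℂ))⁻¹) * B = 1 := by
    rw [hBdef, Matrix.diagonal_mul_diagonal, ← Matrix.diagonal_one]
    refine congrArg Matrix.diagonal (funext fun x => inv_mul_cancel₀ ?_)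
    exact_mod_cast (hbpos x).ne'
  have hBinv' : B * Matrix.diagonal (fun x => ((b x : ℂ))⁻¹) = 1 := by
    rw [hBdef, Matrix.diagonal_mul_diagonal, ← Matrix.diagonal_one]
    refine congrArg Matrix.diagonal (funext fun x => mul_inv_cancel₀ ?_)
    exact_mod_cast (hbpos x).ne'
  have hXBY : X * B * Yᴴ = T := by
    rw [hXdef, Matrix.mul_assoc (T * Y), hBinv, Matrix.mul_one, Matrix.mul_assoc, hYY',
      Matrix.mul_one]
  have hDH : (Matrix.diagonal (fun x => ((b x : ℂ))⁻¹))ᴴ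
      = Matrix.diagonal (fun x => ((b x : ℂ))⁻¹) := by
    rw [Matrix.diagonal_conjTranspose]
    refine congrArg Matrix.diagonal (funext fun x => ?_)
    simp [← Complex.ofReal_inv, Complex.conj_ofReal]
  have hXmem : X ∈ Matrix.unitaryGroup N ℂ := by
    rw [Matrix.mem_unitaryGroup_iff']
    show Xᴴ * X = 1
    rw [hXdef]
    calc (T * Y * Matrix.diagonal (fun x => ((b x : ℂ))⁻¹))ᴴ *
          (T * Y * Matrix.diagonal (fun x => ((b x : ℂ))⁻¹))
        = Matrix.diagonal (fun x => ((b x : ℂ))⁻¹) * (Yᴴ * ((Tᴴ * T) * (Y *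
            Matrix.diagonal (fun x => ((b x : ℂ))⁻¹)))) := by
          rw [Matrix.conjTranspose_mul, Matrix.conjTranspose_mul, hDH]
          simp only [Matrix.mul_assoc]
      _ = 1 := by
          rw [hspec]
          simp only [← Matrix.mul_assoc]
          rw [Matrix.mul_assoc (Matrix.diagonal _) Yᴴ Y, hY'Y, Matrix.mul_one, hBinv,
            one_mul, Matrix.mul_assoc B Yᴴ Y, hY'Y, Matrix.mul_one, hBinv']
  exact ⟨X, Y, b, hXmem, hYmem, hbpos, hXBY⟩

/-- If two multipartite mixed states are SLOCC equivalent, then there exist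
unitaries `X, Y` and an invertible diagonal `B` with positive real entries such
that `ρ₁ = XBY† ρ₂ YBX†` and every single-party realignment of `XBY†` has
rank 1. -/
theorem slocc_mixed_necessary (K : ℕ) (hK : 1 ≤ K) (n : Fin K → ℕ)
    (hn : ∀ i, 1 ≤ n i)
    (ρ₁ ρ₂ : Matrix (∀ i, Fin (n i)) (∀ i, Fin (n i)) ℂ)
    (hρ₁ : ρ₁.PosSemidef) (hρ₂ : ρ₂.PosSemidef)
    (hslocc : ∃ a : ∀ i, Matrix (Fin (n i)) (Fin (n i)) ℂ,
      (∀ i, IsUnit (a i)) ∧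
        ρ₁ = (Matrix.of fun x y => ∏ i, a i (x i) (y i)) * ρ₂ *
          (Matrix.of fun x y => ∏ i, a i (x i) (y i))ᴴ) :
    ∃ (X Y : Matrix (∀ i, Fin (n i)) (∀ i, Fin (n i)) ℂ)
      (b : (∀ i, Fin (n i)) → ℝ),
      X ∈ Matrix.unitaryGroup (∀ i, Fin (n i)) ℂ ∧
      Y ∈ Matrix.unitaryGroup (∀ i, Fin (n i)) ℂ ∧
      (∀ x, 0 < b x) ∧
      ρ₁ = X * Matrix.diagonal (fun x => (b x : ℂ)) * Yᴴ * ρ₂ *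
        Y * Matrix.diagonal (fun x => (b x : ℂ)) * Xᴴ ∧
      ∀ i₀ : Fin K,
        (realignAt (X * Matrix.diagonal (fun x => (b x : ℂ)) * Yᴴ) i₀).rank = 1 := by
  obtain ⟨a, ha, hρeq⟩ := hslocc
  have hne : ∀ i, Nonempty (Fin (n i)) := fun i => ⟨⟨0, hn i⟩⟩
  set T : Matrix (∀ i, Fin (n i)) (∀ i, Fin (n i)) ℂ :=
    Matrix.of fun x y => ∏ i, a i (x i) (y i) with hTdef
  have hTS : T * (Matrix.of fun (x y : ∀ i, Fin (n i)) => ∏ i, (a i)⁻¹ (x i) (y i)) = 1 := by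
    ext x y
    simp only [hTdef, Matrix.mul_apply, Matrix.of_apply]
    calc ∑ z : ∀ i, Fin (n i), (∏ i, a i (x i) (z i)) * ∏ i, (a i)⁻¹ (z i) (y i)
        = ∑ z : ∀ i, Fin (n i), ∏ i, (a i (x i) (z i) * (a i)⁻¹ (z i) (y i)) := by
          simp [Finset.prod_mul_distrib]
      _ = ∏ i, ∑ zi, a i (x i) zi * (a i)⁻¹ zi (y i) :=
          (Fintype.prod_sum (fun i zi => a i (x i) zi * (a i)⁻¹ zi (y i))).symm
      _ = ∏ i, (a i * (a i)⁻¹) (x i) (y i) := by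
          simp [Matrix.mul_apply]
      _ = (1 : Matrix _ _ ℂ) x y := by
          simp only [Matrix.mul_nonsing_inv _ ((Matrix.isUnit_iff_isUnit_det _).mp (ha _)),
            Matrix.one_apply]
          rw [Finset.prod_boole]
          simp [funext_iff]
  obtain ⟨X, Y, b, hXmem, hYmem, hbpos, hXBY⟩ := exists_svd T _ hTS
  have hBH : (Matrix.diagonal fun x : ∀ i, Fin (n i) => (b x : ℂ))ᴴ
      = Matrix.diagonal fun x => (b x : ℂ) := by
    rw [Matrix.diagonal_conjTranspose]
    refine congrArg Matrix.diagonal (funext fun x => ?_)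
    simp [Complex.conj_ofReal]
  have hadj : Tᴴ = Y * Matrix.diagonal (fun x => (b x : ℂ)) * Xᴴ := by
    rw [← hXBY]
    simp only [Matrix.conjTranspose_mul, Matrix.conjTranspose_conjTranspose, hBH,
      Matrix.mul_assoc]
  refine ⟨X, Y, b, hXmem, hYmem, hbpos, ?_, ?_⟩
  · rw [hρeq, hadj, ← hXBY]
    simp only [Matrix.mul_assoc]
  · intro i₀
    rw [hXBY]
    have hreal : realignAt T i₀ =
        Matrix.vecMulVec (fun p : Fin (n i₀) × Fin (n i₀) => a i₀ p.1 p.2)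
          (fun q => ∏ j : {j : Fin K // j ≠ i₀}, a j (q.1 j) (q.2 j)) := by
      ext p q
      simp only [realignAt, Matrix.of_apply, Matrix.vecMulVec_apply, hTdef]
      rw [Finset.prod_eq_mul_prod_sdiff_singleton_of_mem (Finset.mem_univ i₀)]
      congr 1
      · simp
      · rw [Finset.prod_subtype (p := fun j => j ≠ i₀) (Finset.univ \ {i₀}) (fun j => by simp)
          (fun j => a j (extendIdx i₀ p.1 q.1 j) (extendIdx i₀ p.2 q.2 j))]
        exact Finset.prod_congr rfl fun j _ => by
          simp [extendIdx_ne i₀ _ _ j.1 j.2]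
    rw [hreal]
    haveI := hne i₀
    obtain ⟨r, s, hrs⟩ := exists_entry_ne_zero (ha i₀)
    have hwit : ∀ j : {j : Fin K // j ≠ i₀}, ∃ rs : Fin (n j) × Fin (n j),
        a j rs.1 rs.2 ≠ 0 := by
      intro j
      haveI := hne j.1
      obtain ⟨r', s', h'⟩ := exists_entry_ne_zero (ha j.1)
      exact ⟨(r', s'), h'⟩
    refine rank_vecMulVec_eq_one (Function.ne_iff.mpr ⟨(r, s), hrs⟩)
      (Function.ne_iff.mpr ⟨(fun j => (Classical.choose (hwit j)).1,
        fun j => (Classical.choose (hwit j)).2), ?_⟩)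
    exact Finset.prod_ne_zero_iff.mpr fun j _ => Classical.choose_spec (hwit j)
end

section
/- Let K ≥ 1, n : Fin K → ℕ with all n i ≥ 1, and let ρ₁, ρ₂ be Hermitian positive-semidefinite matrices indexed by (Π i : Fin K, Fin (n i))² over ℂ. Suppose there exist unitary matrices X, Y indexed by (Π i, Fin (n i))² and an invertible diagonal matrix B with real diagonal entries such that ρ₁ = X B Y† ρ₂ Y B X†, and for every i₀ : Fin K the realignment of XBY† with respect to the bipartition {i₀} versus the remaining parties has rank 1. Then ρ₁ and ρ₂ are SLOCC equivalent. -/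
set_option maxHeartbeats 1000000

open Matrix ComplexOrder

set_option linter.unusedVariables false in
lemma rank_minor {m' n' : Type*} [Fintype m'] [Fintype n'] [DecidableEq n']
    (A : Matrix m' n' ℂ) (h : A.rank ≤ 1) (p p' : m') (q q' : n') :
    A p q * A p' q' = A p q' * A p' q := by
  rw [Matrix.rank] at h
  obtain ⟨v, hv⟩ := ((Submodule.finrank_le_one_iff_isPrincipal _).mp h).principal
  have hc : ∀ r : n', ∃ c : ℂ, ∀ s : m', A s r = c * v s := by
    intro r
    have hmem : A *ᵥ Pi.single r 1 ∈ LinearMap.range A.mulVecLin :=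
      ⟨Pi.single r 1, rfl⟩
    rw [hv, Submodule.mem_span_singleton] at hmem
    obtain ⟨c, hcv⟩ := hmem
    exact ⟨c, fun s => by simpa [Matrix.mulVec_single] using (congrFun hcv s).symm⟩
  obtain ⟨c, hc1⟩ := hc q
  obtain ⟨c', hc2⟩ := hc q'
  rw [hc1 p, hc1 p', hc2 p, hc2 p']
  ring

lemma extendIdx_restrict {ι : Type*} [DecidableEq ι] {m : ι → ℕ} (i₀ : ι) (a : Fin (m i₀))
    (x : ∀ i, Fin (m i)) :
    extendIdx i₀ a (fun j => x j.1) = Function.update x i₀ a := by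
  funext j
  unfold extendIdx
  by_cases h : j = i₀
  · subst h; simp
  · simp [h, Function.update_of_ne h]

/-- If `ρ₁ = XBY† ρ₂ YBX†` for unitaries `X, Y` and an invertible real diagonal
`B`, and every single-party realignment of `XBY†` has rank 1, then `ρ₁` and
`ρ₂` are SLOCC equivalent. -/
theorem slocc_mixed_sufficient (K : ℕ) (hK : 1 ≤ K) (n : Fin K → ℕ)
    (hn : ∀ i, 1 ≤ n i)
    (ρ₁ ρ₂ : Matrix (∀ i, Fin (n i)) (∀ i, Fin (n i)) ℂ)
    (hρ₁ : ρ₁.PosSemidef) (hρ₂ : ρ₂.PosSemidef)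
    (X Y : Matrix (∀ i, Fin (n i)) (∀ i, Fin (n i)) ℂ)
    (b : (∀ i, Fin (n i)) → ℝ)
    (hX : X ∈ Matrix.unitaryGroup (∀ i, Fin (n i)) ℂ)
    (hY : Y ∈ Matrix.unitaryGroup (∀ i, Fin (n i)) ℂ)
    (hb : ∀ x, b x ≠ 0)
    (hconj : ρ₁ = X * Matrix.diagonal (fun x => (b x : ℂ)) * Yᴴ * ρ₂ *
      Y * Matrix.diagonal (fun x => (b x : ℂ)) * Xᴴ)
    (hrank : ∀ i₀ : Fin K,
      (realignAt (X * Matrix.diagonal (fun x => (b x : ℂ)) * Yᴴ) i₀).rank = 1) :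
    ∃ a : ∀ i, Matrix (Fin (n i)) (Fin (n i)) ℂ,
      (∀ i, IsUnit (a i)) ∧
        ρ₁ = (Matrix.of fun x y => ∏ i, a i (x i) (y i)) * ρ₂ *
          (Matrix.of fun x y => ∏ i, a i (x i) (y i))ᴴ := by
  classical
  haveI : ∀ i, Nonempty (Fin (n i)) := fun i => ⟨⟨0, hn i⟩⟩
  haveI hne : Nonempty (∀ i, Fin (n i)) := ⟨fun i => ⟨0, hn i⟩⟩
  set D : Matrix (∀ i, Fin (n i)) (∀ i, Fin (n i)) ℂ :=
    Matrix.diagonal (fun x => (b x : ℂ)) with hD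
  set T : Matrix (∀ i, Fin (n i)) (∀ i, Fin (n i)) ℂ := X * D * Yᴴ with hTdef
  -- determinant of T is nonzero
  have hdetX : X.det ≠ 0 := by
    have h1 : X * Xᴴ = 1 := by
      have := (Matrix.mem_unitaryGroup_iff).mp hX
      rwa [Matrix.star_eq_conjTranspose] at this
    intro h0
    have := congrArg Matrix.det h1
    rw [Matrix.det_mul, h0, zero_mul, Matrix.det_one] at this
    exact zero_ne_one this
  have hdetY : Y.det ≠ 0 := by
    have h1 : Y * Yᴴ = 1 := by
      have := (Matrix.mem_unitaryGroup_iff).mp hY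
      rwa [Matrix.star_eq_conjTranspose] at this
    intro h0
    have := congrArg Matrix.det h1
    rw [Matrix.det_mul, h0, zero_mul, Matrix.det_one] at this
    exact zero_ne_one this
  have hdetT : T.det ≠ 0 := by
    rw [hTdef, Matrix.det_mul, Matrix.det_mul, hD, Matrix.det_diagonal,
      Matrix.det_conjTranspose]
    refine mul_ne_zero (mul_ne_zero hdetX ?_) ?_
    · exact Finset.prod_ne_zero_iff.mpr fun x _ => Complex.ofReal_ne_zero.mpr (hb x)
    · exact star_ne_zero.mpr hdetY
  -- 2x2 minor identities for realignments
  have hminor : ∀ (i₀ : Fin K) (p p' : Fin (n i₀) × Fin (n i₀)) q q',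
      realignAt T i₀ p q * realignAt T i₀ p' q' =
        realignAt T i₀ p q' * realignAt T i₀ p' q :=
    fun i₀ p p' q q' => rank_minor _ (le_of_eq (hrank i₀)) p p' q q'
  -- the swap identity
  have hswap : ∀ (i₀ : Fin K) (x y x' y' : ∀ i, Fin (n i)),
      T x y * T x' y' =
        T (Function.update x' i₀ (x i₀)) (Function.update y' i₀ (y i₀)) *
          T (Function.update x i₀ (x' i₀)) (Function.update y i₀ (y' i₀)) := by
    intro i₀ x y x' y'
    have h := hminor i₀ (x i₀, y i₀) (x' i₀, y' i₀)
      (fun j => x j.1, fun j => y j.1) (fun j => x' j.1, fun j => y' j.1)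
    simp only [realignAt, Matrix.of_apply, extendIdx_restrict] at h
    simpa [Function.update_eq_self] using h
  -- a point where T is nonzero
  obtain ⟨x₀, y₀, hc0⟩ : ∃ x y, T x y ≠ 0 := by
    by_contra h
    push_neg at h
    apply hdetT
    have hz : T = 0 := by ext x y; exact h x y
    rw [hz, Matrix.det_zero]
  set c := T x₀ y₀ with hcdef
  -- key factorization identity
  have key : ∀ s : Finset (Fin K), ∀ x y : ∀ i, Fin (n i),
      T (fun j => if j ∈ s then x j else x₀ j) (fun j => if j ∈ s then y j else y₀ j) *
          c ^ s.card =
        c * ∏ i ∈ s, T (Function.update x₀ i (x i)) (Function.update y₀ i (y i)) := by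
    intro s
    induction s using Finset.induction_on with
    | empty => intro x y; simp [hcdef]
    | @insert i s hi ih =>
      intro x y
      have hpx : (fun j => if j ∈ insert i s then x j else x₀ j) =
          Function.update (fun j => if j ∈ s then x j else x₀ j) i (x i) := by
        funext j
        by_cases hj : j = i
        · subst hj; simp [hi]
        · simp [Function.update_of_ne hj, hj]
      have hpy : (fun j => if j ∈ insert i s then y j else y₀ j) =
          Function.update (fun j => if j ∈ s then y j else y₀ j) i (y i) := by
        funext j
        by_cases hj : j = i
        · subst hj; simp [hi]
        · simp [Function.update_of_ne hj, hj]
      have h := hswap i (fun j => if j ∈ s then x j else x₀ j)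
        (fun j => if j ∈ s then y j else y₀ j)
        (Function.update x₀ i (x i)) (Function.update y₀ i (y i))
      have hpxi : (fun j => if j ∈ s then x j else x₀ j) i = x₀ i := by simp [hi]
      have hpyi : (fun j => if j ∈ s then y j else y₀ j) i = y₀ i := by simp [hi]
      rw [if_neg hi, if_neg hi, Function.update_self, Function.update_self,
        Function.update_idem, Function.update_idem,
        Function.update_eq_self, Function.update_eq_self] at h
      rw [Finset.card_insert_of_notMem hi, Finset.prod_insert hi, hpx, hpy, pow_succ]
      linear_combination (-(c ^ s.card)) * h +
        T (Function.update x₀ i (x i)) (Function.update y₀ i (y i)) * ih x y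
  have hTfac : ∀ x y : ∀ i, Fin (n i),
      T x y * c ^ K =
        c * ∏ i, T (Function.update x₀ i (x i)) (Function.update y₀ i (y i)) := by
    intro x y
    have h := key Finset.univ x y
    simpa [Finset.card_univ] using h
  -- the local matrices
  set i₁ : Fin K := ⟨0, hK⟩ with hi₁
  set a : ∀ i, Matrix (Fin (n i)) (Fin (n i)) ℂ := fun i =>
    Matrix.of fun p q => (if i = i₁ then (1 : ℂ) else c⁻¹) *
      T (Function.update x₀ i p) (Function.update y₀ i q) with ha
  have hscal : ∏ i : Fin K, (if i = i₁ then (1 : ℂ) else c⁻¹) = c⁻¹ ^ (K - 1) := by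
    rw [← Finset.mul_prod_erase Finset.univ _ (Finset.mem_univ i₁), if_pos rfl, one_mul,
      Finset.prod_congr rfl (fun i hi => if_neg (Finset.ne_of_mem_erase hi)),
      Finset.prod_const, Finset.card_erase_of_mem (Finset.mem_univ _), Finset.card_univ,
      Fintype.card_fin]
  have hc1 : c ^ (K - 1) ≠ 0 := pow_ne_zero _ hc0
  have hT : ∀ x y : ∀ i, Fin (n i), T x y = ∏ i, a i (x i) (y i) := by
    intro x y
    have h2 : T x y * c ^ (K - 1) * c =
        (∏ i, T (Function.update x₀ i (x i)) (Function.update y₀ i (y i))) * c := by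
      rw [mul_assoc, ← pow_succ, Nat.sub_add_cancel hK]
      linear_combination hTfac x y
    have h3 := mul_right_cancel₀ hc0 h2
    simp only [ha, Matrix.of_apply]
    rw [Finset.prod_mul_distrib, hscal, inv_pow, ← h3]
    field_simp
  -- isUnit of each local matrix
  have hunit : ∀ i, IsUnit (a i) := by
    intro i
    by_contra h
    have hd : (a i).det = 0 := by
      by_contra hd
      exact h ((Matrix.isUnit_iff_isUnit_det _).mpr (isUnit_iff_ne_zero.mpr hd))
    obtain ⟨w, hw0, hww⟩ := (Matrix.exists_mulVec_eq_zero_iff).mpr hd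
    set z : ∀ j, Fin (n j) := fun j => ⟨0, hn j⟩ with hz
    set u : ∀ j, Fin (n j) → ℂ := fun j t =>
      if h : j = i then w (cast (congrArg (fun k => Fin (n k)) h) t)
      else (if t = z j then 1 else 0) with hu
    have hui : ∀ t, u i t = w t := by intro t; simp [hu]
    have huj : ∀ j, j ≠ i → ∀ t, u j t = if t = z j then 1 else 0 := by
      intro j hj t; simp [hu, hj]
    set v : (∀ j, Fin (n j)) → ℂ := fun y => ∏ j, u j (y j) with hvdef
    obtain ⟨t, ht⟩ := Function.ne_iff.mp hw0
    have hvne : v (Function.update z i t) ≠ 0 := by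
      refine Finset.prod_ne_zero_iff.mpr fun j _ => ?_
      by_cases hj : j = i
      · subst hj; rw [Function.update_self, hui]; simpa using ht
      · rw [Function.update_of_ne hj, huj j hj, if_pos rfl]; exact one_ne_zero
    have hv0 : v ≠ 0 := fun h0 => hvne (by rw [h0]; rfl)
    have hTv : T *ᵥ v = 0 := by
      funext x
      show ∑ y, T x y * v y = 0
      calc ∑ y, T x y * v y
          = ∑ y : ∀ j, Fin (n j), ∏ j, (a j (x j) (y j) * u j (y j)) := by
            refine Finset.sum_congr rfl fun y _ => ?_
            rw [hT x y, hvdef, ← Finset.prod_mul_distrib]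
        _ = ∏ j, ∑ t', a j (x j) t' * u j t' :=
            (Fintype.prod_sum (fun j t' => a j (x j) t' * u j t')).symm
        _ = 0 := by
            refine Finset.prod_eq_zero (Finset.mem_univ i) ?_
            have := congrFun hww (x i)
            simp only [Matrix.mulVec, dotProduct, Pi.zero_apply] at this
            calc ∑ t', a i (x i) t' * u i t'
                = ∑ t', a i (x i) t' * w t' := by
                  exact Finset.sum_congr rfl fun t' _ => by rw [hui]
              _ = 0 := this
    exact hdetT (Matrix.exists_mulVec_eq_zero_iff.mp ⟨v, hv0, by
      have : T *ᵥ v = 0 := hTv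
      exact this⟩)
  refine ⟨a, hunit, ?_⟩
  have hM : (Matrix.of fun x y => ∏ i, a i (x i) (y i)) = T := by
    ext x y; exact (hT x y).symm
  have hTH : Tᴴ = Y * D * Xᴴ := by
    rw [hTdef]
    simp only [Matrix.conjTranspose_mul, Matrix.conjTranspose_conjTranspose, hD,
      Matrix.diagonal_conjTranspose]
    have : star (fun x => ((b x : ℂ))) = fun x => ((b x : ℂ)) := by
      funext x; simp [Complex.conj_ofReal]
    rw [this, Matrix.mul_assoc]
  rw [hM, hTH, hconj, hTdef]
  simp only [Matrix.mul_assoc]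
end
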